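/- Let S be a real 2n×2n symplectic matrix that is normal (SᵀS = SSᵀ), and suppose S = U·P where U is orthogonal and symplectic and P is symmetric positive definite and symplectic (the polar decomposition of S). Writing hol(M) := (1/2)((A_M + D_M) + i(C_M − B_M)) for the holomorphic block of a 2n×2n matrix M with n×n blocks [[A_M, B_M],[C_M, D_M]], one has det hol(S) = det hol(U) · det hol(P), and |det hol(U)| = 1. -/

import Mathlib

open Matrix

/-- The standard symplectic matrix `J = [[0, −I],[I, 0]]` in `n×n` blocks. -/
noncomputable def Jmat (n : ℕ) : Matrix (Fin n ⊕ Fin n) (Fin n ⊕ Fin n) ℝ :=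
  Matrix.fromBlocks 0 (-1) 1 0

/-- The holomorphic block `hol(M) = (1/2)((A_M + D_M) + i(C_M − B_M))` of a real `2n×2n`
matrix `M` with `n×n` blocks `[[A_M, B_M],[C_M, D_M]]`. -/
noncomputable def hol {n : ℕ} (M : Matrix (Fin n ⊕ Fin n) (Fin n ⊕ Fin n) ℝ) :
    Matrix (Fin n) (Fin n) ℂ :=
  (1 / 2 : ℂ) • ((M.toBlocks₁₁ + M.toBlocks₂₂).map Complex.ofReal +
    Complex.I • (M.toBlocks₂₁ - M.toBlocks₁₂).map Complex.ofReal)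

lemma hol_apply {n : ℕ} (M : Matrix (Fin n ⊕ Fin n) (Fin n ⊕ Fin n) ℝ) (i j : Fin n) :
    hol M i j = (1/2 : ℂ) * (((M (Sum.inl i) (Sum.inl j) : ℂ) + (M (Sum.inr i) (Sum.inr j) : ℂ)) +
      Complex.I * ((M (Sum.inr i) (Sum.inl j) : ℂ) - (M (Sum.inl i) (Sum.inr j) : ℂ))) := by
  simp [hol, Matrix.toBlocks₁₁, Matrix.toBlocks₁₂, Matrix.toBlocks₂₁, Matrix.toBlocks₂₂,
    Matrix.map_apply, Matrix.add_apply, Matrix.sub_apply, Matrix.smul_apply, Matrix.of_apply]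

lemma hol_mul_of_comm {n : ℕ} {U M : Matrix (Fin n ⊕ Fin n) (Fin n ⊕ Fin n) ℝ}
    (h1 : ∀ i k, U (Sum.inr i) (Sum.inl k) = - U (Sum.inl i) (Sum.inr k))
    (h2 : ∀ i k, U (Sum.inr i) (Sum.inr k) = U (Sum.inl i) (Sum.inl k)) :
    hol (U * M) = hol U * hol M := by
  ext i j
  simp only [hol_apply, Matrix.mul_apply, Fintype.sum_sum_type, h1, h2]
  push_cast
  simp only [← Finset.sum_add_distrib, ← Finset.sum_sub_distrib, Finset.mul_sum]
  refine Finset.sum_congr rfl fun k _ => by ring_nf; rw [Complex.I_sq]; ring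

lemma comm_entries {n : ℕ} {U : Matrix (Fin n ⊕ Fin n) (Fin n ⊕ Fin n) ℝ}
    (h : Jmat n * U = U * Jmat n) :
    (∀ i k, U (Sum.inr i) (Sum.inl k) = - U (Sum.inl i) (Sum.inr k)) ∧
    (∀ i k, U (Sum.inr i) (Sum.inr k) = U (Sum.inl i) (Sum.inl k)) := by
  constructor
  · intro i k
    have h' := congrFun (congrFun h (Sum.inl i)) (Sum.inl k)
    simp [Jmat, Matrix.mul_apply, Fintype.sum_sum_type, Matrix.fromBlocks,
      Matrix.one_apply, Finset.sum_ite_eq, Finset.sum_ite_eq'] at h'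
    linarith
  · intro i k
    have h' := congrFun (congrFun h (Sum.inl i)) (Sum.inr k)
    simp [Jmat, Matrix.mul_apply, Fintype.sum_sum_type, Matrix.fromBlocks,
      Matrix.one_apply, Finset.sum_ite_eq, Finset.sum_ite_eq'] at h'
    linarith

lemma hol_one {n : ℕ} : hol (1 : Matrix (Fin n ⊕ Fin n) (Fin n ⊕ Fin n) ℝ) = 1 := by
  ext i j
  by_cases h : i = j
  · subst h; simp [hol_apply, Matrix.one_apply]; norm_num
  · simp [hol_apply, Matrix.one_apply, h]

lemma hol_transpose {n : ℕ} {U : Matrix (Fin n ⊕ Fin n) (Fin n ⊕ Fin n) ℝ}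
    (h1 : ∀ i k, U (Sum.inr i) (Sum.inl k) = - U (Sum.inl i) (Sum.inr k))
    (h2 : ∀ i k, U (Sum.inr i) (Sum.inr k) = U (Sum.inl i) (Sum.inl k)) :
    hol Uᵀ = (hol U)ᴴ := by
  ext i j
  simp [hol_apply, Matrix.conjTranspose_apply, Matrix.transpose_apply, h1 j i, h2 j i,
    Complex.ext_iff]

/-- Let `S` be a real `2n×2n` symplectic matrix that is normal, with polar
decomposition `S = U·P` (`U` orthogonal symplectic, `P` symmetric positive definite symplectic).
Then `det hol(S) = det hol(U) · det hol(P)` and `|det hol(U)| = 1`. -/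
theorem statement1 (n : ℕ) (hn : 1 ≤ n)
    (S U P : Matrix (Fin n ⊕ Fin n) (Fin n ⊕ Fin n) ℝ)
    (hSsymp : Sᵀ * Jmat n * S = Jmat n)
    (hnormal : Sᵀ * S = S * Sᵀ)
    (hUP : S = U * P)
    (hUorth : Uᵀ * U = 1)
    (hUsymp : Uᵀ * Jmat n * U = Jmat n)
    (hPsym : P.IsSymm) (hPpos : P.PosDef)
    (hPsymp : Pᵀ * Jmat n * P = Jmat n) :
    (hol S).det = (hol U).det * (hol P).det ∧ ‖(hol U).det‖ = 1 := by
  -- U commutes with J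
  have hUUT : U * Uᵀ = 1 := mul_eq_one_comm.mp hUorth
  have hcomm : Jmat n * U = U * Jmat n := by
    have : U * (Uᵀ * Jmat n * U) = U * Jmat n := by rw [hUsymp]
    calc Jmat n * U = (U * Uᵀ) * (Jmat n * U) := by rw [hUUT, one_mul]
      _ = U * (Uᵀ * Jmat n * U) := by noncomm_ring
      _ = U * Jmat n := by rw [hUsymp]
  obtain ⟨h1, h2⟩ := comm_entries hcomm
  have hmulS : hol S = hol U * hol P := by rw [hUP]; exact hol_mul_of_comm h1 h2
  -- transpose entries
  have h1T : ∀ i k, Uᵀ (Sum.inr i) (Sum.inl k) = - Uᵀ (Sum.inl i) (Sum.inr k) := by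
    intro i k; simp [Matrix.transpose_apply, h1 k i]
  have h2T : ∀ i k, Uᵀ (Sum.inr i) (Sum.inr k) = Uᵀ (Sum.inl i) (Sum.inl k) := by
    intro i k; simp [Matrix.transpose_apply, h2 k i]
  have hunit : (hol U)ᴴ * hol U = 1 := by
    rw [← hol_transpose h1 h2, ← hol_mul_of_comm h1T h2T, hUorth, hol_one]
  have hdet : (starRingEnd ℂ) ((hol U).det) * (hol U).det = 1 := by
    have := congrArg Matrix.det hunit
    rwa [Matrix.det_mul, Matrix.det_one, Matrix.det_conjTranspose] at this
  have habs : ‖(hol U).det‖ = 1 := by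
    have := congrArg (‖·‖) hdet
    rw [norm_mul, Complex.norm_conj, norm_one] at this
    nlinarith [norm_nonneg ((hol U).det)]
  exact ⟨by rw [hmulS, Matrix.det_mul], habs⟩
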